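/- arXiv:1909.03643 — 2 statements merged into one kernel-verified Lean document; each statement's English description precedes it below -/
import Mathlib

section
/- Let Γ be a finite multiset of real numbers, t ∈ ℝ, δ > 0, and A ≥ 0 such that every closed interval of length δ contains at most A elements of Γ (counted with multiplicity). Then for every b > 0, Σ_{γ ∈ Γ, |t − γ| > b} 1/(t − γ)² ≤ 2A (1/b² + 1/(δ b)). -/
open Multiset

private lemma band_card_le (Γ : Multiset ℝ) (t δ A : ℝ) (hδ : 0 < δ)
    (hcount : ∀ x : ℝ, ((Γ.filter (fun γ => x ≤ γ ∧ γ ≤ x + δ)).card : ℝ) ≤ A)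
    (b : ℝ) :
    ((Γ.filter (fun γ => b < |t - γ| ∧ |t - γ| ≤ b + δ)).card : ℝ) ≤ 2 * A := by
  set p : ℝ → Prop := fun γ => b < |t - γ| ∧ |t - γ| ≤ b + δ with hp
  have hsplit : (Multiset.card (Γ.filter p) : ℝ) =
      (Multiset.card ((Γ.filter p).filter (fun γ => t < γ)) : ℝ) +
      (Multiset.card ((Γ.filter p).filter (fun γ => ¬ t < γ)) : ℝ) := by
    rw [← Nat.cast_add, ← Multiset.card_add, Multiset.filter_add_not]
  have h1 : ((Γ.filter p).filter (fun γ => t < γ)) ≤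
      Γ.filter (fun γ => t + b ≤ γ ∧ γ ≤ (t + b) + δ) := by
    rw [Multiset.filter_filter]
    refine Multiset.monotone_filter_right Γ ?_
    rintro γ ⟨h3, h1, h2⟩
    have habs : |t - γ| = γ - t := by
      rw [abs_sub_comm, abs_of_pos (by linarith)]
    rw [habs] at h1 h2
    constructor <;> linarith
  have h2 : ((Γ.filter p).filter (fun γ => ¬ t < γ)) ≤
      Γ.filter (fun γ => (t - b - δ) ≤ γ ∧ γ ≤ (t - b - δ) + δ) := by
    rw [Multiset.filter_filter]
    refine Multiset.monotone_filter_right Γ ?_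
    rintro γ ⟨h3, h1, h2⟩
    push_neg at h3
    have habs : |t - γ| = t - γ := abs_of_nonneg (by linarith)
    rw [habs] at h1 h2
    constructor <;> linarith
  have c1 := hcount (t + b)
  have c2 := hcount (t - b - δ)
  have d1 : (Multiset.card ((Γ.filter p).filter (fun γ => t < γ)) : ℝ) ≤ A :=
    le_trans (by exact_mod_cast Multiset.card_le_card h1) c1
  have d2 : (Multiset.card ((Γ.filter p).filter (fun γ => ¬ t < γ)) : ℝ) ≤ A :=
    le_trans (by exact_mod_cast Multiset.card_le_card h2) c2
  rw [hsplit]; linarith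

private lemma aux_ind (t δ A : ℝ) (hδ : 0 < δ) (hA : 0 ≤ A) :
    ∀ n : ℕ, ∀ Γ : Multiset ℝ, Multiset.card Γ ≤ n →
    (∀ x : ℝ, ((Γ.filter (fun γ => x ≤ γ ∧ γ ≤ x + δ)).card : ℝ) ≤ A) →
    ∀ b : ℝ, 0 < b →
    ((Γ.filter (fun γ => b < |t - γ|)).map (fun γ => 1 / (t - γ) ^ 2)).sum
      ≤ 2 * A * (1 / b ^ 2 + 1 / (δ * b)) := by
  intro n
  induction n with
  | zero =>
    intro Γ hcard hcount b hb
    have : Γ = 0 := Multiset.card_eq_zero.mp (Nat.le_zero.mp hcard)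
    subst this
    simp only [Multiset.filter_zero, Multiset.map_zero, Multiset.sum_zero]
    positivity
  | succ n ih =>
    intro Γ hcard hcount b hb
    -- the key step, applicable whenever some element lies within b' + δ of t
    have key : ∀ b' : ℝ, 0 < b' → (∃ γ ∈ Γ, |t - γ| ≤ b' + δ) →
        ((Γ.filter (fun γ => b' < |t - γ|)).map (fun γ => 1 / (t - γ) ^ 2)).sum
          ≤ 2 * A * (1 / b' ^ 2 + 1 / (δ * b')) := by
      intro b' hb' ⟨γ0, hγ0, hγ0d⟩
      -- decompose into band and tail
      have hdecomp : Γ.filter (fun γ => b' < |t - γ|) =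
          Γ.filter (fun γ => b' < |t - γ| ∧ |t - γ| ≤ b' + δ) +
          Γ.filter (fun γ => (b' + δ) < |t - γ|) := by
        have := Multiset.filter_add_not (fun γ : ℝ => |t - γ| ≤ b' + δ)
          (Γ.filter (fun γ => b' < |t - γ|))
        rw [Multiset.filter_filter, Multiset.filter_filter] at this
        rw [← this]
        congr 1
        · exact Multiset.filter_congr (fun x _ => by tauto)
        · exact Multiset.filter_congr (fun x _ => by
            constructor
            · rintro ⟨h1, h2⟩; exact lt_of_not_ge h1
            · intro h; exact ⟨not_le.mpr h, by linarith⟩)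
      set band := Γ.filter (fun γ => b' < |t - γ| ∧ |t - γ| ≤ b' + δ) with hband
      set Γ' := Γ.filter (fun γ => (b' + δ) < |t - γ|) with hΓ'
      -- band sum bound
      have hbandsum : ((band).map (fun γ => 1 / (t - γ) ^ 2)).sum
          ≤ 2 * A * (1 / b' ^ 2) := by
        have hle : ∀ x ∈ (band).map (fun γ => 1 / (t - γ) ^ 2), x ≤ 1 / b' ^ 2 := by
          intro x hx
          obtain ⟨γ, hγ, rfl⟩ := Multiset.mem_map.mp hx
          rw [hband, Multiset.mem_filter] at hγ
          obtain ⟨-, h1, -⟩ := hγ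
          have h2 : b' ^ 2 ≤ (t - γ) ^ 2 := by
            have := sq_abs (t - γ)
            nlinarith [abs_nonneg (t - γ)]
          exact one_div_le_one_div_of_le (by positivity) h2
        calc ((band).map (fun γ => 1 / (t - γ) ^ 2)).sum
            ≤ (Multiset.card ((band).map (fun γ => 1 / (t - γ) ^ 2))) • (1 / b' ^ 2) :=
              Multiset.sum_le_card_nsmul _ _ hle
          _ = (Multiset.card band : ℝ) * (1 / b' ^ 2) := by
              rw [Multiset.card_map, nsmul_eq_mul]
          _ ≤ 2 * A * (1 / b' ^ 2) := by
              have := band_card_le Γ t δ A hδ hcount b'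
              have hpos : (0:ℝ) ≤ 1 / b' ^ 2 := by positivity
              exact mul_le_mul_of_nonneg_right this hpos
      -- tail bound via induction hypothesis
      have hΓ'card : Multiset.card Γ' ≤ n := by
        have h0 : γ0 ∈ Γ.filter (fun γ => ¬ (b' + δ) < |t - γ|) :=
          Multiset.mem_filter.mpr ⟨hγ0, not_lt.mpr hγ0d⟩
        have h1 : 0 < Multiset.card (Γ.filter (fun γ => ¬ (b' + δ) < |t - γ|)) :=
          Multiset.card_pos_iff_exists_mem.mpr ⟨γ0, h0⟩
        have h2 : Multiset.card Γ' +
            Multiset.card (Γ.filter (fun γ => ¬ (b' + δ) < |t - γ|)) = Multiset.card Γ := by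
          rw [← Multiset.card_add, Multiset.filter_add_not]
        omega
      have hΓ'count : ∀ x : ℝ, ((Γ'.filter (fun γ => x ≤ γ ∧ γ ≤ x + δ)).card : ℝ) ≤ A := by
        intro x
        refine le_trans ?_ (hcount x)
        exact_mod_cast Multiset.card_le_card
          (Multiset.filter_le_filter _ (Multiset.filter_le _ Γ))
      have htail0 := ih Γ' hΓ'card hΓ'count (b' + δ) (by linarith)
      have hΓ'filter : Γ'.filter (fun γ => (b' + δ) < |t - γ|) = Γ' := by
        rw [hΓ', Multiset.filter_filter]
        exact Multiset.filter_congr (fun x _ => by tauto)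
      rw [hΓ'filter] at htail0
      -- combine
      have hsum : ((Γ.filter (fun γ => b' < |t - γ|)).map (fun γ => 1 / (t - γ) ^ 2)).sum
          = ((band).map (fun γ => 1 / (t - γ) ^ 2)).sum
            + ((Γ').map (fun γ => 1 / (t - γ) ^ 2)).sum := by
        rw [hdecomp, Multiset.map_add, Multiset.sum_add]
      rw [hsum]
      have harith : 1 / (b' + δ) ^ 2 + 1 / (δ * (b' + δ)) ≤ 1 / (δ * b') := by
        rw [div_add_div _ _ (by positivity) (by positivity),
          div_le_div_iff₀ (by positivity) (by positivity)]
        ring_nf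
        nlinarith [sq_nonneg b', sq_nonneg δ, mul_pos hb' hδ, mul_pos hδ hb']
      nlinarith [htail0, hbandsum, mul_le_mul_of_nonneg_left harith (by linarith : (0:ℝ) ≤ 2 * A)]
    by_cases h : ∃ γ ∈ Γ, |t - γ| ≤ b + δ
    · exact key b hb h
    · push_neg at h
      by_cases hΓ : Γ = 0
      · subst hΓ
        simp only [Multiset.filter_zero, Multiset.map_zero, Multiset.sum_zero]
        positivity
      · -- all elements far from t; move b up to just below the minimum distance
        obtain ⟨γ0, hγ0f, hγ0min⟩ := Finset.exists_min_image Γ.toFinset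
          (fun γ => |t - γ|) (by
            rw [Finset.nonempty_iff_ne_empty]
            intro hc
            exact hΓ (by simpa [Multiset.toFinset_eq_empty] using hc))
        have hγ0 : γ0 ∈ Γ := Multiset.mem_toFinset.mp hγ0f
        set m := |t - γ0| with hm
        have hmb : b + δ < m := h γ0 hγ0
        set b'' := m - δ / 2 with hb''
        have hb''pos : 0 < b'' := by rw [hb'']; linarith
        have hbb'' : b ≤ b'' := by rw [hb'']; linarith
        have hkey := key b'' hb''pos ⟨γ0, hγ0, by rw [hb'']; rw [← hm]; linarith⟩
        have hfeq : Γ.filter (fun γ => b < |t - γ|) = Γ.filter (fun γ => b'' < |t - γ|) := by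
          refine Multiset.filter_congr (fun γ hγ => ?_)
          have h1 : b + δ < |t - γ| := h γ hγ
          have h2 : m ≤ |t - γ| := hγ0min γ (Multiset.mem_toFinset.mpr hγ)
          constructor <;> intro _
          · rw [hb'']; linarith
          · linarith
        rw [hfeq]
        refine le_trans hkey ?_
        have : 1 / b'' ^ 2 + 1 / (δ * b'') ≤ 1 / b ^ 2 + 1 / (δ * b) := by
          gcongr <;> nlinarith
        nlinarith [this]

theorem stmt_8 (Γ : Multiset ℝ) (t δ A : ℝ) (hδ : 0 < δ) (hA : 0 ≤ A)
    (hcount : ∀ x : ℝ, ((Γ.filter (fun γ => x ≤ γ ∧ γ ≤ x + δ)).card : ℝ) ≤ A)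
    (b : ℝ) (hb : 0 < b) :
    ((Γ.filter (fun γ => b < |t - γ|)).map (fun γ => 1 / (t - γ) ^ 2)).sum
      ≤ 2 * A * (1 / b ^ 2 + 1 / (δ * b)) := by
  exact aux_ind t δ A hδ hA (Multiset.card Γ) Γ le_rfl hcount b hb
end

section
/- Let m ≥ 1 be an integer and σ ≥ 1/2, X ≥ 3 real. Then there exists an absolute constant C > 0 such that Σ_{p > X} 1/(p^{2σ} (log p)^{2m}) ≤ ( (2m+1)/(2m) + C/log X ) · X^{1−2σ} / (log X)^{2m}, where the sum is over primes p > X. -/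
open Real

lemma aux_log_gt (x : ℝ) (hx : 3 ≤ x) : 1 < Real.log x := by
  rw [Real.lt_log_iff_exp_lt (by linarith)]
  calc Real.exp 1 < 2.7182818286 := Real.exp_one_lt_d9
    _ ≤ x := by linarith

lemma aux_hasDerivAt (s : ℝ) (j : ℕ) {x : ℝ} (hx : 3 ≤ x) :
    HasDerivAt (fun y : ℝ => y ^ (-s) * ((Real.log y) ^ (j+1))⁻¹)
      (-(x ^ (-s-1) * ((Real.log x) ^ (j+2))⁻¹ * (s * Real.log x + (j+1)))) x := by
  have hx0 : (0:ℝ) < x := by linarith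
  have hxne : x ≠ 0 := ne_of_gt hx0
  have hlog : 1 < Real.log x := aux_log_gt x hx
  have hlne : Real.log x ≠ 0 := by linarith
  have h1 : HasDerivAt (fun y : ℝ => y ^ (-s)) (-s * x ^ (-s - 1)) x :=
    Real.hasDerivAt_rpow_const (Or.inl hxne)
  have h2 : HasDerivAt (fun y : ℝ => Real.log y) x⁻¹ x := Real.hasDerivAt_log hxne
  have h3 : HasDerivAt (fun y : ℝ => (Real.log y) ^ (j+1))
      ((j+1) * (Real.log x) ^ j * x⁻¹) x := by
    simpa using h2.fun_pow (j+1)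
  have h4 := h3.fun_inv (by positivity)
  have h5 := h1.fun_mul h4
  refine h5.congr_deriv ?_
  have hxs : x ^ (-s) = x ^ (-s-1) * x := by
    rw [← Real.rpow_add_one hxne (-s-1)]; ring_nf
  rw [hxs]
  field_simp
  ring

lemma key_scalar (s M L ℓ : ℝ) (hs : 1 ≤ s) (hM : 2 ≤ M) (hL : 1 ≤ L) (hℓ : L ≤ ℓ) :
    s * ℓ + M + 1 ≤ (1/M + 5/(2*L)) * ℓ * ((s-1)*ℓ + M) := by
  have hM0 : (0:ℝ) < M := by linarith
  have hL0 : (0:ℝ) < L := by linarith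
  have hK : (1/M + 5/(2*L)) * ℓ * ((s-1)*ℓ + M)
      = (2*L + 5*M) * (ℓ * ((s-1)*ℓ + M)) / (2*L*M) := by
    rw [eq_div_iff (by positivity)]; field_simp
  rw [hK, le_div_iff₀ (by positivity)]
  nlinarith [mul_nonneg (mul_nonneg (mul_nonneg (by linarith : (0:ℝ) ≤ M) (by linarith : (0:ℝ) ≤ s - 1)) (by linarith : (0:ℝ) ≤ ℓ)) (by linarith : (0:ℝ) ≤ 5*ℓ - 2*L),
    mul_nonneg (mul_nonneg (mul_nonneg (by linarith : (0:ℝ) ≤ 2*L) (by linarith : (0:ℝ) ≤ s - 1)) (by linarith : (0:ℝ) ≤ ℓ)) (by linarith : (0:ℝ) ≤ ℓ),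
    mul_nonneg (mul_nonneg (by linarith : (0:ℝ) ≤ 5*M) (by linarith : (0:ℝ) ≤ M)) (by linarith : (0:ℝ) ≤ ℓ - L),
    mul_nonneg (mul_nonneg (by linarith : (0:ℝ) ≤ L) (by linarith : (0:ℝ) ≤ M)) (by linarith : (0:ℝ) ≤ 3*M - 2)]

lemma aux_deriv_ineq (σ X y : ℝ) (m j : ℕ) (hσ : 1/2 ≤ σ) (hX : 3 ≤ X) (hm : 1 ≤ m)
    (hj : 2*m = j+1) (hy : X ≤ y) {x : ℝ} (hx : y ≤ x) :
    y * (x ^ (-(2*σ)-1) * ((Real.log x) ^ (2*m+2))⁻¹ * (2*σ * Real.log x + ((2*m : ℕ) + 1)))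
    ≤ (1/(2*(m:ℝ)) + 5/(2*Real.log X)) *
      (x ^ (-(2*σ-1)-1) * ((Real.log x) ^ (j+2))⁻¹ * ((2*σ-1) * Real.log x + ((j:ℕ) + 1))) := by
  have hx3 : 3 ≤ x := by linarith
  have hx0 : (0:ℝ) < x := by linarith
  have hℓ1 : 1 < Real.log x := aux_log_gt x hx3
  have hℓ0 : (0:ℝ) < Real.log x := by linarith
  have hℓne : Real.log x ≠ 0 := ne_of_gt hℓ0
  have hL1 : 1 ≤ Real.log X := (aux_log_gt X hX).le
  have hℓL : Real.log X ≤ Real.log x := Real.log_le_log (by linarith) (by linarith)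
  have hm2 : (2:ℝ) ≤ 2*(m:ℝ) := by
    have : (1:ℝ) ≤ (m:ℝ) := by exact_mod_cast hm
    linarith
  have key := key_scalar (2*σ) (2*(m:ℝ)) (Real.log X) (Real.log x)
    (by linarith) hm2 hL1 hℓL
  -- rewrite exponents
  have e1 : x ^ (-(2*σ-1)-1) = x ^ (-(2*σ)-1) * x := by
    rw [← Real.rpow_add_one (ne_of_gt hx0) (-(2*σ)-1)]
    congr 1; ring
  have e2 : (Real.log x) ^ (j+2) = (Real.log x) ^ (2*m+1) := by
    congr 1; omega
  have e3 : (Real.log x) ^ (2*m+2) = (Real.log x) ^ (2*m+1) * Real.log x := by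
    rw [pow_succ]
  have e4 : ((j:ℝ) + 1) = 2*(m:ℝ) := by
    have : ((2*m : ℕ) : ℝ) = ((j+1 : ℕ) : ℝ) := by exact_mod_cast congrArg Nat.cast hj
    push_cast at this ⊢
    linarith
  rw [e1, e2, e3, e4]
  set A := x ^ (-(2*σ)-1) with hA
  have hA0 : 0 < A := Real.rpow_pos_of_pos hx0 _
  set B := ((Real.log x) ^ (2*m+1))⁻¹ with hB
  have hB0 : 0 < B := by positivity
  set ℓ := Real.log x
  set K := (1/(2*(m:ℝ)) + 5/(2*Real.log X)) with hK
  have hK0 : 0 < K := by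
    have : (0:ℝ) < Real.log X := by linarith
    positivity
  push_cast
  -- goal : y * (A * (ℓ^(2m+1) * ℓ)⁻¹ * (2σℓ + (2m+1))) ≤ K * (A * x * B * ((2σ-1)ℓ + 2m))
  have hterm0 : (0:ℝ) < 2*σ*ℓ + (2*(m:ℝ) + 1) := by nlinarith
  calc y * (A * (ℓ ^ (2*m+1) * ℓ)⁻¹ * (2*σ*ℓ + (2*(m:ℝ) + 1)))
      = y * (A * (B * ℓ⁻¹) * (2*σ*ℓ + (2*(m:ℝ) + 1))) := by rw [mul_inv]
    _ ≤ x * (A * (B * ℓ⁻¹) * (2*σ*ℓ + (2*(m:ℝ) + 1))) := by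
        apply mul_le_mul_of_nonneg_right hx
        positivity
    _ ≤ x * (A * (B * ℓ⁻¹) * (K * ℓ * ((2*σ-1)*ℓ + 2*(m:ℝ)))) := by
        apply mul_le_mul_of_nonneg_left _ (le_of_lt hx0)
        apply mul_le_mul_of_nonneg_left (by linarith [key]) (by positivity)
    _ = K * (A * x * B * ((2*σ-1)*ℓ + 2*(m:ℝ))) := by
        field_simp

lemma aux_antitoneOn (s : ℝ) (hs : 0 ≤ s) (j : ℕ) :
    AntitoneOn (fun y : ℝ => y ^ (-s) * ((Real.log y) ^ (j+1))⁻¹) (Set.Ici (3:ℝ)) := by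
  apply antitoneOn_of_deriv_nonpos (convex_Ici 3)
  · intro x hx
    exact (aux_hasDerivAt s j hx).continuousAt.continuousWithinAt
  · intro x hx
    rw [interior_Ici] at hx
    exact (aux_hasDerivAt s j (le_of_lt hx)).differentiableAt.differentiableWithinAt
  · intro x hx
    rw [interior_Ici] at hx
    have hx3 : (3:ℝ) ≤ x := le_of_lt hx
    rw [(aux_hasDerivAt s j hx3).deriv]
    have hlog : 1 < Real.log x := aux_log_gt x hx3
    have hx0 : (0:ℝ) < x := by linarith
    have h1 : (0:ℝ) ≤ x ^ (-s-1) := by positivity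
    have h2 : (0:ℝ) ≤ ((Real.log x) ^ (j+2))⁻¹ := by positivity
    have h3 : (0:ℝ) ≤ s * Real.log x + (j+1) := by
      have ha : (0:ℝ) ≤ s * Real.log x := by nlinarith
      have hb : (0:ℝ) ≤ (j:ℝ) + 1 := by positivity
      linarith
    nlinarith [mul_nonneg (mul_nonneg h1 h2) h3]

lemma aux_step (σ X y : ℝ) (m j : ℕ) (hσ : 1/2 ≤ σ) (hX : 3 ≤ X) (hm : 1 ≤ m)
    (hj : 2*m = j+1) (hy : X ≤ y) :
    y * (y ^ (-(2*σ)) * ((Real.log y) ^ (2*m+1))⁻¹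
        - (y+1) ^ (-(2*σ)) * ((Real.log (y+1)) ^ (2*m+1))⁻¹)
    ≤ (1/(2*(m:ℝ)) + 5/(2*Real.log X)) *
      (y ^ (-(2*σ-1)) * ((Real.log y) ^ (j+1))⁻¹
        - (y+1) ^ (-(2*σ-1)) * ((Real.log (y+1)) ^ (j+1))⁻¹) := by
  have hy3 : (3:ℝ) ≤ y := le_trans hX hy
  set K := (1/(2*(m:ℝ)) + 5/(2*Real.log X)) with hK
  set g : ℝ → ℝ := fun x => x ^ (-(2*σ)) * ((Real.log x) ^ (2*m+1))⁻¹ with hg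
  set H : ℝ → ℝ := fun x => x ^ (-(2*σ-1)) * ((Real.log x) ^ (j+1))⁻¹ with hH
  have hψ : AntitoneOn (fun x => K * H x - y * g x) (Set.Icc y (y+1)) := by
    apply antitoneOn_of_deriv_nonpos (convex_Icc _ _)
    · intro x hx
      have hx3 : (3:ℝ) ≤ x := le_trans hy3 hx.1
      exact (((aux_hasDerivAt (2*σ-1) j hx3).const_mul K).sub
        ((aux_hasDerivAt (2*σ) (2*m) hx3).const_mul y)).continuousAt.continuousWithinAt
    · intro x hx
      rw [interior_Icc] at hx
      have hx3 : (3:ℝ) ≤ x := le_trans hy3 hx.1.le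
      exact (((aux_hasDerivAt (2*σ-1) j hx3).const_mul K).sub
        ((aux_hasDerivAt (2*σ) (2*m) hx3).const_mul y)).differentiableAt.differentiableWithinAt
    · intro x hx
      rw [interior_Icc] at hx
      have hx3 : (3:ℝ) ≤ x := le_trans hy3 hx.1.le
      rw [(((aux_hasDerivAt (2*σ-1) j hx3).const_mul K).fun_sub
        ((aux_hasDerivAt (2*σ) (2*m) hx3).const_mul y)).deriv]
      have := aux_deriv_ineq σ X y m j hσ hX hm hj hy (le_of_lt hx.1)
      push_cast at this ⊢
      linarith
  have h1 := hψ (Set.mem_Icc.mpr ⟨le_refl y, by linarith⟩)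
    (Set.mem_Icc.mpr ⟨by linarith, le_refl _⟩) (by linarith)
  simp only [hg, hH] at h1
  linarith


lemma theta_le (n : ℕ) :
    (∑ k ∈ Finset.range (n+1), if k.Prime then Real.log k else 0) ≤ n * Real.log 4 := by
  have h1 : (∑ k ∈ Finset.range (n+1), if k.Prime then Real.log k else 0)
      = Real.log ((primorial n : ℕ) : ℝ) := by
    rw [primorial, Nat.cast_prod, Real.log_prod]
    · rw [Finset.sum_filter]
    · intro p hp
      have := (Finset.mem_filter.mp hp).2.pos
      positivity
  rw [h1]
  calc Real.log ((primorial n : ℕ) : ℝ) ≤ Real.log ((4:ℝ) ^ n) := by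
        apply Real.log_le_log (by exact_mod_cast (primorial_pos n))
        exact_mod_cast primorial_le_4_pow n
    _ = n * Real.log 4 := by rw [Real.log_pow]

set_option maxHeartbeats 1000000 in
theorem stmt_14 : ∃ C : ℝ, 0 < C ∧
    ∀ (m : ℕ), 1 ≤ m → ∀ σ X : ℝ, 1 / 2 ≤ σ → 3 ≤ X →
      (∑' p : Nat.Primes,
          (if X < ((p : ℕ) : ℝ) then
            1 / (((p : ℕ) : ℝ) ^ (2 * σ) * Real.log ((p : ℕ) : ℝ) ^ (2 * m))
          else 0))
        ≤ ((2 * m + 1) / (2 * m) + C / Real.log X) * X ^ (1 - 2 * σ) / Real.log X ^ (2 * m) := by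
  refine ⟨5, by norm_num, ?_⟩
  intro m hm σ X hσ hX
  obtain ⟨j, hj⟩ : ∃ j, 2*m = j+1 := ⟨2*m-1, by omega⟩
  have hX0 : (0:ℝ) < X := by linarith
  have hL1 : 1 < Real.log X := aux_log_gt X hX
  have hL0 : (0:ℝ) < Real.log X := by linarith
  have hm1 : (1:ℝ) ≤ (m:ℝ) := by exact_mod_cast hm
  set K := (1/(2*(m:ℝ)) + 5/(2*Real.log X)) with hKdef
  have hK0 : 0 < K := by positivity
  set g : ℝ → ℝ := fun x => x ^ (-(2*σ)) * ((Real.log x) ^ (2*m+1))⁻¹ with hg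
  set H : ℝ → ℝ := fun x => x ^ (-(2*σ-1)) * ((Real.log x) ^ (j+1))⁻¹ with hH
  have hgnn : ∀ x : ℝ, 2 ≤ x → 0 ≤ g x := by
    intro x hx
    have h2 : 0 < Real.log x := Real.log_pos (by linarith)
    have h3 : (0:ℝ) < x := by linarith
    rw [hg]; positivity
  have hHnn : ∀ x : ℝ, 2 ≤ x → 0 ≤ H x := by
    intro x hx
    have h2 : 0 < Real.log x := Real.log_pos (by linarith)
    have h3 : (0:ℝ) < x := by linarith
    rw [hH]; positivity
  have hganti : AntitoneOn g (Set.Ici 3) := by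
    rw [hg]; exact aux_antitoneOn (2*σ) (by linarith) (2*m)
  have hHanti : AntitoneOn H (Set.Ici 3) := by
    rw [hH]; exact aux_antitoneOn (2*σ-1) (by linarith) j
  set θ : ℕ → ℝ := fun n => ∑ k ∈ Finset.range (n+1), if k.Prime then Real.log k else 0
    with hθ
  have hθnn : ∀ n, 0 ≤ θ n := by
    intro n; rw [hθ]; apply Finset.sum_nonneg; intro k hk
    split
    · exact Real.log_natCast_nonneg k
    · exact le_refl 0
  have hθsucc : ∀ n : ℕ, θ (n+1) = θ n + (if (n+1).Prime then Real.log ((n+1 : ℕ) : ℝ) else 0) :=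
    fun n => Finset.sum_range_succ _ _
  set f : ℕ → ℝ := fun n => if n.Prime then Real.log n * g n else 0 with hf
  have hfnn : ∀ n, 0 ≤ f n := by
    intro n; rw [hf]; dsimp only; split
    · rename_i hp
      have hn2 : (2:ℝ) ≤ (n:ℝ) := by exact_mod_cast hp.two_le
      exact mul_nonneg (Real.log_natCast_nonneg n) (hgnn n hn2)
    · exact le_refl 0
  have hfstep : ∀ n : ℕ, f (n+1) = (θ (n+1) - θ n) * g ((n:ℝ)+1) := by
    intro n
    rw [hθsucc n, hf]
    dsimp only
    push_cast
    split <;> ring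
  set N0 := Nat.floor X with hN0
  have hN03 : 3 ≤ N0 := Nat.le_floor (by exact_mod_cast hX)
  have hXltN0 : X < (N0:ℝ) + 1 := Nat.lt_floor_add_one X
  have hlog4 : (0:ℝ) ≤ Real.log 4 := Real.log_nonneg (by norm_num)
  -- the invariant
  have hInv : ∀ N : ℕ, N0 + 1 ≤ N →
      (∑ n ∈ Finset.Ioc N0 N, f n)
        ≤ θ N * g N + Real.log 4 * K * (H ((N0:ℝ)+1) - H N) := by
    intro N hN
    induction N, hN using Nat.le_induction with
    | base =>
      rw [Finset.sum_Ioc_succ_top (le_refl N0), Finset.Ioc_self, Finset.sum_empty, zero_add]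
      have h1 := hfstep N0
      have hg1 : 0 ≤ g ((N0:ℝ)+1) := by
        apply hgnn
        have : (3:ℝ) ≤ (N0:ℝ) := by exact_mod_cast hN03
        linarith
      push_cast
      rw [h1]
      have h2 : (θ (N0+1) - θ N0) * g ((N0:ℝ)+1) ≤ θ (N0+1) * g ((N0:ℝ)+1) := by
        apply mul_le_mul_of_nonneg_right _ hg1
        linarith [hθnn N0]
      push_cast at h2
      linarith
    | succ N hN IH =>
      have hN3 : (3:ℝ) ≤ (N:ℝ) := by
        have : (3:ℕ) ≤ N := by omega
        exact_mod_cast this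
      have hXN : X ≤ (N:ℝ) := by
        have : ((N0:ℝ)+1) ≤ (N:ℝ) := by exact_mod_cast hN
        linarith
      have key := aux_step σ X (N:ℝ) m j hσ hX hm hj hXN
      have key' : (N:ℝ) * (g (N:ℝ) - g ((N:ℝ)+1)) ≤ K * (H (N:ℝ) - H ((N:ℝ)+1)) := by
        rw [hg, hH, hKdef]; exact key
      have hgmono : g ((N:ℝ)+1) ≤ g (N:ℝ) := by
        apply hganti (Set.mem_Ici.mpr hN3) (Set.mem_Ici.mpr (by linarith)) (by linarith)
      have hθle' : θ N ≤ (N:ℝ) * Real.log 4 := theta_le N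
      have chain : θ N * (g (N:ℝ) - g ((N:ℝ)+1)) ≤ Real.log 4 * (K * (H (N:ℝ) - H ((N:ℝ)+1))) := by
        calc θ N * (g (N:ℝ) - g ((N:ℝ)+1))
            ≤ ((N:ℝ) * Real.log 4) * (g (N:ℝ) - g ((N:ℝ)+1)) := by
              apply mul_le_mul_of_nonneg_right hθle' (by linarith)
          _ = Real.log 4 * ((N:ℝ) * (g (N:ℝ) - g ((N:ℝ)+1))) := by ring
          _ ≤ Real.log 4 * (K * (H (N:ℝ) - H ((N:ℝ)+1))) :=
              mul_le_mul_of_nonneg_left key' hlog4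
      rw [Finset.sum_Ioc_succ_top (by omega : N0 ≤ N), hfstep N]
      push_cast
      push_cast at IH chain
      linarith
  -- per-N final bound
  have hbound : ∀ N : ℕ, N0 + 1 ≤ N →
      (∑ n ∈ Finset.Ioc N0 N, f n)
        ≤ Real.log 4 * (K + 1/Real.log X) * (X ^ (-(2*σ-1)) * ((Real.log X) ^ (j+1))⁻¹) := by
    intro N hN
    have hN3 : (3:ℝ) ≤ (N:ℝ) := by
      have : (3:ℕ) ≤ N := by omega
      exact_mod_cast this
    have hXN : X ≤ (N:ℝ) := by
      have : ((N0:ℝ)+1) ≤ (N:ℝ) := by exact_mod_cast hN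
      linarith
    have hN0' : (0:ℝ) < (N:ℝ) := by linarith
    have hlogN1 : 1 < Real.log (N:ℝ) := aux_log_gt _ hN3
    have hLlogN : Real.log X ≤ Real.log (N:ℝ) := Real.log_le_log hX0 hXN
    have h1 := hInv N hN
    -- N * g N = H N * (log N)⁻¹
    have hgN : (N:ℝ) * g (N:ℝ) = H (N:ℝ) * (Real.log (N:ℝ))⁻¹ := by
      rw [hg, hH]
      dsimp only
      have e1 : (N:ℝ) ^ (-(2*σ-1)) = (N:ℝ) ^ (-(2*σ)) * (N:ℝ) := by
        rw [← Real.rpow_add_one (ne_of_gt hN0')]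
        congr 1; ring
      have e2 : (Real.log (N:ℝ)) ^ (2*m+1) = (Real.log (N:ℝ)) ^ (j+1) * Real.log (N:ℝ) := by
        rw [show 2*m+1 = (j+1)+1 by omega, pow_succ]
      rw [e1, e2, mul_inv]
      ring
    have hHXnn : 0 ≤ H X := hHnn X (by linarith)
    have hHN : H (N:ℝ) ≤ H X :=
      hHanti (Set.mem_Ici.mpr hX) (Set.mem_Ici.mpr hN3) hXN
    have hHNnn : 0 ≤ H (N:ℝ) := hHnn _ (by linarith)
    have hHN01 : H ((N0:ℝ)+1) ≤ H X := by
      apply hHanti (Set.mem_Ici.mpr hX) (Set.mem_Ici.mpr (by linarith)) (by linarith)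
    have hterm1 : θ N * g (N:ℝ) ≤ Real.log 4 * (H X * (Real.log X)⁻¹) := by
      have hgNnn : 0 ≤ g (N:ℝ) := hgnn _ (by linarith)
      calc θ N * g (N:ℝ) ≤ ((N:ℝ) * Real.log 4) * g (N:ℝ) :=
            mul_le_mul_of_nonneg_right (theta_le N) hgNnn
        _ = Real.log 4 * ((N:ℝ) * g (N:ℝ)) := by ring
        _ = Real.log 4 * (H (N:ℝ) * (Real.log (N:ℝ))⁻¹) := by rw [hgN]
        _ ≤ Real.log 4 * (H X * (Real.log X)⁻¹) := by
            apply mul_le_mul_of_nonneg_left _ hlog4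
            apply mul_le_mul hHN _ (by positivity) hHXnn
            exact inv_anti₀ hL0 hLlogN
    have hterm2 : Real.log 4 * K * (H ((N0:ℝ)+1) - H (N:ℝ)) ≤ Real.log 4 * K * H X := by
      apply mul_le_mul_of_nonneg_left _ (by positivity)
      linarith
    have hexp : Real.log 4 * (K + 1/Real.log X) * H X
        = Real.log 4 * (H X * (Real.log X)⁻¹) + Real.log 4 * K * H X := by
      field_simp
      ring
    have : (∑ n ∈ Finset.Ioc N0 N, f n) ≤ Real.log 4 * (K + 1/Real.log X) * H X := by
      rw [hexp]
      refine le_trans h1 ?_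
      exact add_le_add hterm1 hterm2
    rw [hH] at this
    exact this
  -- coefficient comparison
  have hlog4' : Real.log 4 ≤ 1.4 := by
    rw [show (4:ℝ) = 2^2 by norm_num, Real.log_pow]
    push_cast
    nlinarith [Real.log_two_lt_d9]
  have hm0 : (0:ℝ) < 2*(m:ℝ) := by linarith
  have hcoef : Real.log 4 * (K + 1/Real.log X)
      ≤ (2*(m:ℝ)+1)/(2*(m:ℝ)) + 5/Real.log X := by
    have hexpand : K + 1/Real.log X = 1/(2*(m:ℝ)) + 7/(2*Real.log X) := by
      rw [hKdef]; field_simp; ring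
    rw [hexpand]
    have h1 : Real.log 4 * (1/(2*(m:ℝ))) ≤ (2*(m:ℝ)+1)/(2*(m:ℝ)) := by
      rw [mul_one_div, div_le_div_iff₀ hm0 hm0]
      nlinarith
    have h2 : Real.log 4 * (7/(2*Real.log X)) ≤ 5/Real.log X := by
      have he : Real.log 4 * (7/(2*Real.log X)) = (7*Real.log 4)/(2*Real.log X) := by ring
      rw [he, div_le_div_iff₀ (by positivity) hL0]
      nlinarith
    calc Real.log 4 * (1/(2*(m:ℝ)) + 7/(2*Real.log X))
        = Real.log 4 * (1/(2*(m:ℝ))) + Real.log 4 * (7/(2*Real.log X)) := by ring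
      _ ≤ _ := add_le_add h1 h2
  have hHX : H X = X ^ (1-2*σ) * ((Real.log X) ^ (2*m))⁻¹ := by
    rw [hH]
    dsimp only
    rw [show -(2*σ-1) = 1-2*σ by ring, show j+1 = 2*m by omega]
  have hXrnn : (0:ℝ) ≤ X ^ (1-2*σ) := Real.rpow_nonneg hX0.le _
  have hRHS : Real.log 4 * (K + 1/Real.log X) * H X
      ≤ ((2*(m:ℝ)+1)/(2*(m:ℝ)) + 5/Real.log X) * X ^ (1-2*σ) / (Real.log X)^(2*m) := by
    rw [hHX]
    have he : ((2*(m:ℝ)+1)/(2*(m:ℝ)) + 5/Real.log X) * X ^ (1-2*σ) / (Real.log X)^(2*m)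
        = ((2*(m:ℝ)+1)/(2*(m:ℝ)) + 5/Real.log X) * (X ^ (1-2*σ) * ((Real.log X)^(2*m))⁻¹) := by
      ring
    rw [he]
    apply mul_le_mul_of_nonneg_right hcoef
    exact mul_nonneg hXrnn (inv_nonneg.mpr (pow_nonneg hL0.le _))
  have hRHSnn : (0:ℝ)
      ≤ ((2*(m:ℝ)+1)/(2*(m:ℝ)) + 5/Real.log X) * X ^ (1-2*σ) / (Real.log X)^(2*m) := by
    apply div_nonneg (mul_nonneg _ hXrnn) (pow_nonneg hL0.le _)
    positivity
  -- reduce the tsum to finite sums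
  apply tsum_le_of_sum_le' hRHSnn
  intro u
  set G : ℕ → ℝ := fun n =>
    if X < (n:ℝ) then 1 / ((n:ℝ) ^ (2*σ) * Real.log (n:ℝ) ^ (2*m)) else 0 with hG
  set A : Finset ℕ := u.image (fun p : Nat.Primes => (p : ℕ)) with hA
  have hinj : ∀ x ∈ u, ∀ y ∈ u, (x : ℕ) = (y : ℕ) → x = y := fun x _ y _ h => Subtype.ext h
  have hsum1 : (∑ p ∈ u,
      (if X < ((p:ℕ):ℝ) then 1 / (((p:ℕ):ℝ) ^ (2*σ) * Real.log ((p:ℕ):ℝ) ^ (2*m)) else 0))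
      = ∑ n ∈ A, G n := by
    rw [hA, Finset.sum_image hinj]
  rw [hsum1]
  set N := max (A.sup id) (N0+1) with hNdef
  have hNge : N0+1 ≤ N := le_max_right _ _
  have hAle : ∀ n ∈ A, n ≤ N := fun n hn =>
    le_trans (Finset.le_sup (f := id) hn) (le_max_left _ _)
  have hAprime : ∀ n ∈ A, n.Prime := by
    intro n hn
    rw [hA, Finset.mem_image] at hn
    obtain ⟨p, _, rfl⟩ := hn
    exact p.2
  have hGf : ∀ n ∈ A, G n ≤ f n := by
    intro n hn
    have hp := hAprime n hn
    rw [hG]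
    dsimp only
    by_cases hXn : X < (n:ℝ)
    · rw [if_pos hXn]
      have hn0 : (0:ℝ) < (n:ℝ) := by linarith
      have hlogn : 1 < Real.log (n:ℝ) := aux_log_gt _ (by linarith)
      have hrne : (n:ℝ) ^ (2*σ) ≠ 0 := by positivity
      have heq : 1 / ((n:ℝ) ^ (2*σ) * Real.log (n:ℝ) ^ (2*m)) = Real.log (n:ℝ) * g (n:ℝ) := by
        rw [hg]
        dsimp only
        rw [Real.rpow_neg hn0.le, pow_succ, mul_inv]
        field_simp
      rw [heq, hf]
      dsimp only
      rw [if_pos hp]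
    · rw [if_neg hXn]
      exact hfnn n
  have hvanish : ∀ x ∈ A, x ∉ A ∩ Finset.Ioc N0 N → G x = 0 := by
    intro x hx hnx
    rw [Finset.mem_inter] at hnx
    push_neg at hnx
    have hxI : x ∉ Finset.Ioc N0 N := hnx hx
    rw [Finset.mem_Ioc] at hxI
    push_neg at hxI
    have hxle : x ≤ N0 := by
      by_contra hcon
      push_neg at hcon
      exact absurd (hAle x hx) (not_le.mpr (hxI hcon))
    have : (x:ℝ) ≤ X := le_trans (by exact_mod_cast hxle) (Nat.floor_le hX0.le)
    rw [hG]
    dsimp only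
    rw [if_neg (by linarith)]
  calc (∑ n ∈ A, G n) = ∑ n ∈ A ∩ Finset.Ioc N0 N, G n :=
        (Finset.sum_subset Finset.inter_subset_left hvanish).symm
    _ ≤ ∑ n ∈ A ∩ Finset.Ioc N0 N, f n :=
        Finset.sum_le_sum (fun n hn => hGf n (Finset.inter_subset_left hn))
    _ ≤ ∑ n ∈ Finset.Ioc N0 N, f n :=
        Finset.sum_le_sum_of_subset_of_nonneg Finset.inter_subset_right (fun n _ _ => hfnn n)
    _ ≤ Real.log 4 * (K + 1/Real.log X) * H X := hbound N hNge
    _ ≤ ((2*(m:ℝ)+1)/(2*(m:ℝ)) + 5/Real.log X) * X ^ (1-2*σ) / (Real.log X)^(2*m) := hRHS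
end
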